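/- arXiv:2205.06708 — 3 statements merged into one kernel-verified Lean document; each statement's English description precedes it below -/
import Mathlib

section
/- Suppose the joint distribution P of a triple (Y, A, B) of discrete random variables is exchangeable in its last two coordinates, i.e., P(Y=y, A=a, B=b) = P(Y=y, A=b, B=a) for all y, a, b, where A and B take values in the message set M. Then for any stochastic decoder D: Y → Δ(M), 2·E[∑_{m̂ ≠ A} D(m̂|Y)] ≥ P(A ≠ B). Consequently the average decoding error probability E[D({m̂ : m̂ ≠ A}|Y)] is at least P(A ≠ B)/2. -/
open Finset

/-- If the joint distribution of `(Y, A, B)` is exchangeable in its last two coordinates,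
then for any stochastic decoder `D`, twice the average error probability
`E[∑_{m̂ ≠ A} D(m̂|Y)]` is at least `P(A ≠ B)`; equivalently, the average decoding error
probability is at least `P(A ≠ B)/2`. -/
theorem stmt_4 {Y M : Type*} [Fintype Y] [Fintype M] [DecidableEq M]
    (P : Y → M → M → ℝ) (hP0 : ∀ y a b, 0 ≤ P y a b)
    (hPsum : ∑ y, ∑ a, ∑ b, P y a b = 1)
    (hsymm : ∀ y a b, P y a b = P y b a)
    (D : Y → M → ℝ) (hD0 : ∀ y m, 0 ≤ D y m) (hDsum : ∀ y, ∑ m, D y m = 1) :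
    (∑ y, ∑ a, ∑ b, if a ≠ b then P y a b else 0)
      ≤ 2 * ∑ y, ∑ a, ∑ b, P y a b *
          ∑ mhat ∈ Finset.univ.filter (fun mhat => mhat ≠ a), D y mhat ∧
    (∑ y, ∑ a, ∑ b, if a ≠ b then P y a b else 0) / 2
      ≤ ∑ y, ∑ a, ∑ b, P y a b *
          ∑ mhat ∈ Finset.univ.filter (fun mhat => mhat ≠ a), D y mhat := by
  have hfilter : ∀ y (a : M),
      (∑ mhat ∈ Finset.univ.filter (fun mhat => mhat ≠ a), D y mhat) = 1 - D y a := by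
    intro y a
    have := Finset.sum_filter_add_sum_filter_not Finset.univ (fun mhat => mhat ≠ a) (D y)
    have h2 : (∑ mhat ∈ Finset.univ.filter (fun mhat => ¬ mhat ≠ a), D y mhat) = D y a := by
      rw [Finset.sum_filter]
      simp
    rw [hDsum y] at this
    linarith
  have hDle1 : ∀ y (a : M), D y a ≤ 1 := by
    intro y a
    rw [← hDsum y]
    exact Finset.single_le_sum (fun m _ => hD0 y m) (Finset.mem_univ a)
  -- main inequality
  have key : (∑ y, ∑ a, ∑ b, if a ≠ b then P y a b else 0)
      ≤ 2 * ∑ y, ∑ a, ∑ b, P y a b *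
          ∑ mhat ∈ Finset.univ.filter (fun mhat => mhat ≠ a), D y mhat := by
    have step1 : (∑ y, ∑ a, ∑ b, if a ≠ b then P y a b else 0)
        ≤ ∑ y, ∑ a, ∑ b : M, P y a b * ((1 - D y a) + (1 - D y b)) := by
      refine Finset.sum_le_sum fun y _ => Finset.sum_le_sum fun a _ =>
        Finset.sum_le_sum fun b _ => ?_
      by_cases h : a = b
      · simp [h]
        exact mul_nonneg (hP0 y b b) (by nlinarith [hDle1 y b])
      · simp [h]
        have hab : D y a + D y b ≤ 1 := by
          have : D y a + D y b ≤ ∑ m, D y m := by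
            classical
            have := Finset.sum_le_sum_of_subset_of_nonneg
              (Finset.subset_univ ({a, b} : Finset M)) (fun m _ _ => hD0 y m)
            rwa [Finset.sum_pair h] at this
          rw [hDsum y] at this; exact this
        nlinarith [hP0 y a b]
    have step2 : (∑ y, ∑ a, ∑ b : M, P y a b * ((1 - D y a) + (1 - D y b)))
        = 2 * ∑ y, ∑ a, ∑ b, P y a b *
          ∑ mhat ∈ Finset.univ.filter (fun mhat => mhat ≠ a), D y mhat := by
      have swap : ∀ y : Y, (∑ a, ∑ b : M, P y a b * (1 - D y b))
          = ∑ a, ∑ b : M, P y a b * (1 - D y a) := by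
        intro y
        rw [Finset.sum_comm]
        exact Finset.sum_congr rfl fun a _ => Finset.sum_congr rfl fun b _ => by
          rw [hsymm]
      calc (∑ y, ∑ a, ∑ b : M, P y a b * ((1 - D y a) + (1 - D y b)))
          = ∑ y, ((∑ a, ∑ b : M, P y a b * (1 - D y a))
              + ∑ a, ∑ b : M, P y a b * (1 - D y b)) := by
            refine Finset.sum_congr rfl fun y _ => ?_
            rw [← Finset.sum_add_distrib]
            refine Finset.sum_congr rfl fun a _ => ?_
            rw [← Finset.sum_add_distrib]
            exact Finset.sum_congr rfl fun b _ => by ring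
        _ = ∑ y, (2 * ∑ a, ∑ b : M, P y a b * (1 - D y a)) := by
            refine Finset.sum_congr rfl fun y _ => ?_
            rw [swap y]; ring
        _ = 2 * ∑ y, ∑ a, ∑ b, P y a b *
            ∑ mhat ∈ Finset.univ.filter (fun mhat => mhat ≠ a), D y mhat := by
            rw [Finset.mul_sum]
            refine Finset.sum_congr rfl fun y _ => ?_
            congr 1
            exact Finset.sum_congr rfl fun a _ => Finset.sum_congr rfl fun b _ => by
              rw [hfilter]
    linarith [step1, step2.symm.le, step2.le]
  exact ⟨key, by linarith⟩
end

section
/- Let P ∈ Δ(X²) be a joint distribution and P_X, P_{X'} its marginals, and suppose ‖P − Q⊗Q‖_∞ ≤ δ for some Q ∈ Δ(X), and suppose additionally P(x,x') = 0 whenever Q(x) = 0 or Q(x') = 0. Let W: X×S → Y be a channel with W(y|x,s) ∈ [0,1] and V*, V ∈ Δ(S|X²) be such that for all (x,x',y): P(x,x')·∑_s V*(s|x,x')W(y|x,s) = P(x',x)·∑_s V(s|x',x)W(y|x',s). Then for all (x, x', y) with Q(x) ≠ 0 and Q(x') ≠ 0, |∑_s V*(s|x,x')W(y|x,s) − ∑_s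 V(s|x',x)W(y|x',s)| ≤ 2δ/(Q(x)·Q(x')). -/
open Finset

/-- Approximate symmetrization from exact symmetrization under a near-product joint type.
If `‖P − Q⊗Q‖∞ ≤ δ`, `P(x,x') = 0` whenever `Q(x) = 0` or `Q(x') = 0`, and
`P(x,x')·∑_s V*(s|x,x')W(y|x,s) = P(x',x)·∑_s V(s|x',x)W(y|x',s)` for all `(x,x',y)`,
then wherever `Q(x) ≠ 0 ≠ Q(x')`,
`|∑_s V*(s|x,x')W(y|x,s) − ∑_s V(s|x',x)W(y|x',s)| ≤ 2δ/(Q(x)·Q(x'))`. -/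
theorem stmt_9 {X S Y : Type*} [Fintype X] [Fintype S] [Fintype Y]
    (δ : ℝ) (hδ : 0 ≤ δ)
    (P : X → X → ℝ) (hP0 : ∀ x x', 0 ≤ P x x')
    (Q : X → ℝ) (hQ0 : ∀ x, 0 ≤ Q x) (hQsum : ∑ x, Q x = 1)
    (hclose : ∀ x x', |P x x' - Q x * Q x'| ≤ δ)
    (hsupp : ∀ x x', Q x = 0 ∨ Q x' = 0 → P x x' = 0)
    (W : X → S → Y → ℝ) (hW0 : ∀ x s y, 0 ≤ W x s y) (hW1 : ∀ x s y, W x s y ≤ 1)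
    (Vstar V : X → X → S → ℝ)
    (hVstar0 : ∀ x x' s, 0 ≤ Vstar x x' s) (hVstarsum : ∀ x x', ∑ s, Vstar x x' s = 1)
    (hV0 : ∀ x x' s, 0 ≤ V x x' s) (hVsum : ∀ x x', ∑ s, V x x' s = 1)
    (hsym : ∀ x x' y,
      P x x' * ∑ s, Vstar x x' s * W x s y = P x' x * ∑ s, V x' x s * W x' s y) :
    ∀ x x' y, Q x ≠ 0 → Q x' ≠ 0 →
      |(∑ s, Vstar x x' s * W x s y) - ∑ s, V x' x s * W x' s y|
        ≤ 2 * δ / (Q x * Q x') := by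
  intro x x' y hx hx'
  set A := ∑ s, Vstar x x' s * W x s y with hA
  set B := ∑ s, V x' x s * W x' s y with hB
  have hA0 : 0 ≤ A := Finset.sum_nonneg fun s _ => mul_nonneg (hVstar0 _ _ _) (hW0 _ _ _)
  have hA1 : A ≤ 1 := by
    rw [hA]
    calc ∑ s, Vstar x x' s * W x s y ≤ ∑ s, Vstar x x' s := by
          apply Finset.sum_le_sum
          intro s _
          exact mul_le_of_le_one_right (hVstar0 _ _ _) (hW1 _ _ _)
      _ = 1 := hVstarsum x x'
  have hB0 : 0 ≤ B := Finset.sum_nonneg fun s _ => mul_nonneg (hV0 _ _ _) (hW0 _ _ _)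
  have hB1 : B ≤ 1 := by
    rw [hB]
    calc ∑ s, V x' x s * W x' s y ≤ ∑ s, V x' x s := by
          apply Finset.sum_le_sum
          intro s _
          exact mul_le_of_le_one_right (hV0 _ _ _) (hW1 _ _ _)
      _ = 1 := hVsum x' x
  have hq : 0 < Q x * Q x' :=
    mul_pos ((hQ0 x).lt_of_ne (Ne.symm hx)) ((hQ0 x').lt_of_ne (Ne.symm hx'))
  rw [le_div_iff₀ hq]
  have hkey : Q x * Q x' * (A - B)
      = (Q x * Q x' - P x x') * A + (P x' x - Q x' * Q x) * B := by
    have := hsym x x' y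
    rw [← hA, ← hB] at this
    nlinarith [this]
  calc |A - B| * (Q x * Q x') = |Q x * Q x' * (A - B)| := by
        rw [abs_mul, abs_of_pos hq]; ring
    _ = |(Q x * Q x' - P x x') * A + (P x' x - Q x' * Q x) * B| := by rw [hkey]
    _ ≤ |(Q x * Q x' - P x x') * A| + |(P x' x - Q x' * Q x) * B| := abs_add_le _ _
    _ ≤ δ * 1 + δ * 1 := by
        gcongr
        · rw [abs_mul]
          have h1 : |Q x * Q x' - P x x'| ≤ δ := by
            rw [abs_sub_comm]; exact hclose x x'
          exact mul_le_mul h1 (abs_le.mpr ⟨by linarith, hA1⟩) (abs_nonneg _) hδ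
        · rw [abs_mul]
          exact mul_le_mul (hclose x' x) (abs_le.mpr ⟨by linarith, hB1⟩) (abs_nonneg _) hδ
    _ = 2 * δ := by ring
end

section
/- Let A, B be random variables with values in a finite set M such that conditioned on a third random variable Y they are i.i.d., and suppose on an event E₁ = {Y ∈ A₁} the conditional entropy satisfies H(A | Y = y) ≥ h for all y ∈ A₁. Then P(A ≠ B | E₁) ≥ (h − 1 − log 2)/log|M|. -/
open Finset

/-- Binary Shannon entropy of a distribution on a finite type. -/
noncomputable def shannonEntropy {V : Type*} [Fintype V] (P : V → ℝ) : ℝ :=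
  ∑ v, -(P v * Real.logb 2 (P v))

/-- Max-probability Fano-type bound: `H(Q) ≤ 1 + (1 - ∑ Q m ^ 2) * log₂ |M|`. -/
lemma collision_bound {M : Type*} [Fintype M] [DecidableEq M]
    (hM : 2 ≤ Fintype.card M)
    (Q : M → ℝ) (h0 : ∀ m, 0 ≤ Q m) (hs : ∑ m, Q m = 1) :
    shannonEntropy Q ≤ 1 + (1 - ∑ m, Q m ^ 2) * Real.logb 2 (Fintype.card M) := by
  have hcard : (0:ℕ) < Fintype.card M := by omega
  have : Nonempty M := Fintype.card_pos_iff.mp hcard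
  obtain ⟨m', -, hmax⟩ := Finset.exists_max_image (Finset.univ : Finset M) Q univ_nonempty
  have hmax : ∀ m, Q m ≤ Q m' := fun m => hmax m (mem_univ m)
  set n : ℝ := (Fintype.card M : ℝ) with hn
  have hn2 : (2:ℝ) ≤ n := by rw [hn]; exact_mod_cast hM
  have hnpos : (0:ℝ) < n := by linarith
  have hlog2 : (0:ℝ) < Real.log 2 := Real.log_pos (by norm_num)
  set R : M → ℝ := fun m => if m = m' then 1/2 + 1/(2*n) else 1/(2*n) with hR
  have hRpos : ∀ m, 0 < R m := by
    intro m; simp only [hR]; split <;> positivity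
  have hRsum : ∑ m, R m = 1 := by
    have : ∀ m, R m = 1/(2*n) + (if m = m' then 1/2 else 0) := by
      intro m; by_cases hm : m = m' <;> simp [hR, hm] <;> ring
    rw [Finset.sum_congr rfl fun m _ => this m, Finset.sum_add_distrib,
      Finset.sum_const, Finset.sum_ite_eq' Finset.univ m' (fun _ => (1:ℝ)/2)]
    simp only [mem_univ, if_true, card_univ, nsmul_eq_mul, ← hn]
    field_simp
    ring
  -- Gibbs: ∑ negMulLog Q ≤ ∑ Q m * (-log (R m))
  have gibbs : ∑ m, Real.negMulLog (Q m) ≤ ∑ m, Q m * (-Real.log (R m)) := by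
    have key : ∀ m : M, Real.negMulLog (Q m) ≤ Q m * (-Real.log (R m)) + (R m - Q m) := by
      intro m
      rcases eq_or_lt_of_le (h0 m) with hq | hq
      · simp [← hq, Real.negMulLog]; exact (hRpos m).le
      · have h1 : Real.log (R m / Q m) ≤ R m / Q m - 1 :=
          Real.log_le_sub_one_of_pos (by positivity)
        have h2 : Real.log (R m / Q m) = Real.log (R m) - Real.log (Q m) :=
          Real.log_div (hRpos m).ne' hq.ne'
        have := mul_le_mul_of_nonneg_left h1 hq.le
        rw [h2] at this
        have h3 : Q m * (R m / Q m - 1) = R m - Q m := by field_simp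
        rw [h3] at this
        unfold Real.negMulLog; nlinarith
    calc ∑ m, Real.negMulLog (Q m) ≤ ∑ m, (Q m * (-Real.log (R m)) + (R m - Q m)) :=
          Finset.sum_le_sum fun m _ => key m
      _ = ∑ m, Q m * (-Real.log (R m)) + (∑ m, R m - ∑ m, Q m) := by
          rw [Finset.sum_add_distrib, Finset.sum_sub_distrib]
      _ = ∑ m, Q m * (-Real.log (R m)) := by rw [hRsum, hs]; ring
  -- bound the cross entropy
  have cross : ∑ m, Q m * (-Real.log (R m))
      ≤ Real.log 2 + (1 - Q m') * Real.log n := by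
    have key : ∀ m : M, Q m * (-Real.log (R m))
        ≤ Q m * (Real.log 2 + (if m = m' then 0 else Real.log n)) := by
      intro m
      apply mul_le_mul_of_nonneg_left _ (h0 m)
      by_cases hm : m = m'
      · simp only [hR, hm, if_true, add_zero]
        have h12 : (1:ℝ)/2 ≤ 1/2 + 1/(2*n) := by
          have : (0:ℝ) ≤ 1/(2*n) := by positivity
          linarith
        have := Real.log_le_log (by norm_num) h12
        rw [show Real.log ((1:ℝ)/2) = -Real.log 2 by
          rw [Real.log_div one_ne_zero (by norm_num), Real.log_one]; ring] at this
        linarith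
      · simp only [hR, hm, if_false]
        rw [show (1:ℝ)/(2*n) = (2*n)⁻¹ by ring, Real.log_inv,
          Real.log_mul (by norm_num) hnpos.ne']
        linarith
    calc ∑ m, Q m * (-Real.log (R m))
        ≤ ∑ m, Q m * (Real.log 2 + (if m = m' then 0 else Real.log n)) :=
          Finset.sum_le_sum fun m _ => key m
      _ = Real.log 2 * ∑ m, Q m + Real.log n * ∑ m, (if m = m' then 0 else Q m) := by
          rw [Finset.mul_sum, Finset.mul_sum, ← Finset.sum_add_distrib]
          congr 1; ext m; by_cases hm : m = m' <;> simp [hm] <;> ring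
      _ = Real.log 2 + Real.log n * (1 - Q m') := by
          rw [hs, mul_one]
          congr 2
          have e : ∀ m : M, (if m = m' then 0 else Q m)
              = Q m - (if m = m' then Q m' else 0) := by
            intro m; split <;> simp_all
          rw [Finset.sum_congr rfl fun m _ => e m, Finset.sum_sub_distrib,
            Finset.sum_ite_eq' Finset.univ m' (fun _ => Q m'), hs]
          simp
      _ = Real.log 2 + (1 - Q m') * Real.log n := by ring
  have hent_eq : shannonEntropy Q = (∑ m, Real.negMulLog (Q m)) / Real.log 2 := by
    unfold shannonEntropy
    rw [Finset.sum_div]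
    refine Finset.sum_congr rfl fun m _ => ?_
    rw [Real.logb, Real.negMulLog]
    ring
  have hsq : ∑ m, Q m ^ 2 ≤ Q m' := by
    calc ∑ m, Q m ^ 2 ≤ ∑ m, Q m * Q m' :=
          Finset.sum_le_sum fun m _ => by nlinarith [h0 m, hmax m]
      _ = Q m' := by rw [← Finset.sum_mul, hs, one_mul]
  have hlognn : 0 ≤ Real.log n := Real.log_nonneg (by linarith)
  rw [hent_eq, div_le_iff₀ hlog2]
  have expand : (1 + (1 - ∑ m, Q m ^ 2) * Real.logb 2 n) * Real.log 2
      = Real.log 2 + (1 - ∑ m, Q m ^ 2) * Real.log n := by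
    rw [Real.logb]
    field_simp
  rw [expand]
  have step : (1 - Q m') * Real.log n ≤ (1 - ∑ m, Q m ^ 2) * Real.log n :=
    mul_le_mul_of_nonneg_right (by linarith) hlognn
  linarith [gibbs.trans cross]

/-- Conditional no-collision bound: if `A, B` are conditionally i.i.d. given `Y` (with
conditional law `Q y`) and `H(A | Y = y) ≥ h` for every `y` in an event `A₁` of positive
probability, then `P(A ≠ B | Y ∈ A₁) ≥ (h − 1 − log 2)/log|M|`. -/
theorem stmt_14 {Y M : Type*} [Fintype Y] [Fintype M] [DecidableEq M]
    (hM : 2 ≤ Fintype.card M)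
    (pY : Y → ℝ) (hpY : ∀ y, 0 ≤ pY y) (hpYsum : ∑ y, pY y = 1)
    (Q : Y → M → ℝ) (hQ0 : ∀ y m, 0 ≤ Q y m) (hQsum : ∀ y, ∑ m, Q y m = 1)
    (A₁ : Finset Y) (hA₁pos : 0 < ∑ y ∈ A₁, pY y)
    (h : ℝ) (hent : ∀ y ∈ A₁, h ≤ shannonEntropy (Q y)) :
    (h - 1 - Real.logb 2 2) / Real.logb 2 (Fintype.card M)
      ≤ (∑ y ∈ A₁, pY y * ∑ a, ∑ b, if a ≠ b then Q y a * Q y b else 0)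
          / ∑ y ∈ A₁, pY y := by
  have hL : 0 < Real.logb 2 (Fintype.card M) := by
    apply Real.logb_pos one_lt_two
    exact_mod_cast hM
  set L := Real.logb 2 (Fintype.card M) with hLdef
  -- the collision sum equals 1 - ∑ Q y m ^ 2
  have hq : ∀ y : Y, (∑ a, ∑ b, if a ≠ b then Q y a * Q y b else 0)
      = 1 - ∑ m, Q y m ^ 2 := by
    intro y
    have : ∀ a : M, (∑ b, if a ≠ b then Q y a * Q y b else 0)
        = Q y a - Q y a ^ 2 := by
      intro a
      have e : ∀ b : M, (if a ≠ b then Q y a * Q y b else 0)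
          = Q y a * Q y b - (if b = a then Q y a * Q y a else 0) := by
        intro b
        by_cases hb : b = a
        · subst hb; simp
        · have hab : a ≠ b := fun hab => hb hab.symm
          simp [hab, hb]
      rw [Finset.sum_congr rfl fun b _ => e b, Finset.sum_sub_distrib,
        ← Finset.mul_sum, hQsum y, mul_one,
        Finset.sum_ite_eq' Finset.univ a (fun _ => Q y a * Q y a)]
      simp [sq]
    rw [Finset.sum_congr rfl fun a _ => this a, Finset.sum_sub_distrib, hQsum y]
  -- pointwise bound
  have key : ∀ y ∈ A₁, (h - 1 - Real.logb 2 2) / L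
      ≤ ∑ a, ∑ b, if a ≠ b then Q y a * Q y b else 0 := by
    intro y hy
    rw [div_le_iff₀ hL, hq y]
    have h1 := (hent y hy).trans (collision_bound hM (Q y) (hQ0 y) (hQsum y))
    rw [Real.logb_self_eq_one one_lt_two]
    nlinarith [hL]
  -- average
  rw [le_div_iff₀ hA₁pos]
  calc (h - 1 - Real.logb 2 2) / L * ∑ y ∈ A₁, pY y
      = ∑ y ∈ A₁, (h - 1 - Real.logb 2 2) / L * pY y := by rw [Finset.mul_sum]
    _ ≤ ∑ y ∈ A₁, pY y * ∑ a, ∑ b, if a ≠ b then Q y a * Q y b else 0 := by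
        refine Finset.sum_le_sum fun y hy => ?_
        rw [mul_comm]
        exact mul_le_mul_of_nonneg_left (key y hy) (hpY y)
end
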